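/- arXiv:2109.07328 — 3 statements merged into one kernel-verified Lean document; each statement's English description precedes it below -/
import Mathlib

section
/- For each positive integer k, s(M_k) = μ_k, where M_k = 2^k - 1 and μ_k = 3·M_k + 2 = 2^(k+1) + 2^k - 1. -/
/-- `Alist k` is the list `A_{k+1}`: `A_1 = [5]`, `A_{k+1} = A_k ++ A_k ++ [1]`. -/
def Alist : ℕ → List ℕ
  | 0 => [5]
  | k+1 => Alist k ++ Alist k ++ [1]

/-- `aseq n` is the `n`-th term (1-indexed) of the limit of the lists `A_k`;
`aseq 0 = 0` by convention. -/
def aseq (n : ℕ) : ℕ := (Alist n).getD (n - 1) 0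

/-- Partial sums: `s n = a_1 + ⋯ + a_n`, `s 0 = 0`. -/
def s (n : ℕ) : ℕ := ∑ i ∈ Finset.Icc 1 n, aseq i

lemma Alist_length (k : ℕ) : (Alist k).length = 2 ^ (k + 1) - 1 := by
  induction k with
  | zero => simp [Alist]
  | succ k ih =>
    have h : 1 ≤ 2 ^ (k + 1) := Nat.one_le_two_pow
    simp [Alist, ih, pow_succ]
    omega

lemma Alist_prefix_le {j k : ℕ} (h : j ≤ k) : Alist j <+: Alist k := by
  induction k with
  | zero => simp [Nat.le_zero.mp h]
  | succ k ih =>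
    rcases Nat.lt_succ_iff_lt_or_eq.mp (Nat.lt_succ_of_le h) with h' | h'
    · exact (ih (Nat.lt_succ_iff.mp h')).trans ⟨Alist k ++ [1], by simp [Alist]⟩
    · simp [h']

lemma aseq_eq (k i : ℕ) (hi : i - 1 < (Alist k).length) :
    aseq i = (Alist k).getD (i - 1) 0 := by
  have hii : i - 1 < (Alist i).length := by
    have h1 := Alist_length i
    have h2 : i < 2 ^ (i + 1) :=
      lt_of_lt_of_le (Nat.lt_two_pow_self (n := i)) (Nat.pow_le_pow_right (by norm_num) (by omega))
    omega
  rcases le_total i k with h | h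
  · have hp := Alist_prefix_le h
    rw [aseq, List.getD_eq_getElem _ _ hii, List.getD_eq_getElem _ _ hi,
      hp.getElem hii]
  · have hp := Alist_prefix_le h
    rw [aseq, List.getD_eq_getElem _ _ hii, List.getD_eq_getElem _ _ hi,
      hp.getElem hi]

lemma sum_getD (l : List ℕ) : ∑ i ∈ Finset.range l.length, l.getD i 0 = l.sum := by
  induction l with
  | nil => simp
  | cons a l ih =>
    rw [List.length_cons, Finset.sum_range_succ']
    simp only [List.getD_cons_succ, List.getD_cons_zero, List.sum_cons, ih]
    omega

lemma Alist_sum (k : ℕ) : (Alist k).sum = 3 * 2 ^ (k + 1) - 1 := by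
  induction k with
  | zero => simp [Alist]
  | succ k ih =>
    have h : 1 ≤ 2 ^ (k + 1) := Nat.one_le_two_pow
    simp [Alist, ih, pow_succ]
    omega

/-- For each positive integer `k`, `s(M_k) = μ_k = 3·M_k + 2`. -/
theorem s_mersenne (k : ℕ) (hk : 1 ≤ k) :
    s (2 ^ k - 1) = 3 * (2 ^ k - 1) + 2 := by
  obtain ⟨j, rfl⟩ := Nat.exists_eq_add_of_le hk
  have hlen : (Alist j).length = 2 ^ (1 + j) - 1 := by
    rw [Alist_length, add_comm]
  have h1 : 1 ≤ 2 ^ (1 + j) := Nat.one_le_two_pow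
  have key : s (2 ^ (1 + j) - 1) = (Alist j).sum := by
    rw [s, ← sum_getD (Alist j), hlen, ← Finset.Ico_add_one_right_eq_Icc,
      Finset.sum_Ico_eq_sum_range]
    apply Finset.sum_congr (by simp)
    intro i hi
    simp only [Finset.mem_range] at hi
    rw [aseq_eq j (1 + i) (by omega)]
    congr 1
    omega
  rw [key, Alist_sum]
  have hlen2 : 2 ^ (j + 1) = 2 ^ (1 + j) := by rw [add_comm]
  omega
end

section
/- Let h ≥ 1 and let f = {f_0, f_1, ..., f_h} be a symmetric pebbling configuration on the complete binary tree T^h of height h, i.e., f_i pebbles on each vertex of level i. Let n(f) = Σ_{i=0}^h 2^i f_i be the total number of pebbles and c(f) = Σ_{i=0}^h f_i. If f can deliver a pebble to every leaf of T^h via pebbling moves, then 3·n(f) − c(f) ≥ 2^{h+1}. -/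
def dL (h : ℕ) (w : ℕ) : ℕ :=
  if hw : w ≤ 1 then h
  else if 2 ^ Nat.log2 w = w then h - Nat.log2 w
  else dL h (w / 2) + 1
decreasing_by exact Nat.div_lt_self (by omega) one_lt_two

lemma log2_level {i w : ℕ} (h1 : 2 ^ i ≤ w) (h2 : w < 2 ^ (i + 1)) :
    Nat.log2 w = i := by
  have hw : w ≠ 0 := by have := pow_pos (by norm_num : (0:ℕ) < 2) i; omega
  have a := (Nat.le_log2 hw).2 h1
  have b := (Nat.log2_lt hw).2 h2
  omega

lemma log2_half {w : ℕ} (hw : 2 ≤ w) : Nat.log2 w = Nat.log2 (w / 2) + 1 := by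
  rw [Nat.log2_def]; simp [hw]

lemma dL_pow (h i : ℕ) : dL h (2 ^ i) = h - i := by
  rw [dL]
  rcases Nat.eq_zero_or_pos i with rfl | hi
  · simp
  · have : ¬ 2 ^ i ≤ 1 := by
      have : 2 ^ 1 ≤ 2 ^ i := Nat.pow_le_pow_right (by norm_num) hi
      omega
    rw [dif_neg this, if_pos (by rw [Nat.log2_two_pow]), Nat.log2_two_pow]

lemma dL_not_pow {h w : ℕ} (hw : 2 ≤ w) (hnp : 2 ^ Nat.log2 w ≠ w) :
    dL h w = dL h (w / 2) + 1 := by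
  rw [dL, dif_neg (by omega), if_neg hnp]

/-- adjacency: distances to the leaf differ by at most 1 across an edge. -/
lemma dL_adj {h w : ℕ} (hw : 2 ≤ w) :
    dL h (w / 2) ≤ dL h w + 1 ∧ dL h w ≤ dL h (w / 2) + 1 := by
  by_cases hp : 2 ^ Nat.log2 w = w
  · set k := Nat.log2 w with hk
    have hk1 : 1 ≤ k := by
      by_contra hc
      push_neg at hc
      interval_cases k
      · simp at hp; omega
    have hw2 : w / 2 = 2 ^ (k - 1) := by
      rw [← hp, ← Nat.pow_div hk1 (by norm_num), pow_one]
    have e1 : dL h w = h - k := by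
      rw [dL, dif_neg (by omega), if_pos hp]
    rw [hw2, dL_pow, e1]
    omega
  · rw [dL_not_pow hw hp]
    omega

/-- upper bound on the distance. -/
lemma dL_le (h : ℕ) : ∀ w, dL h w ≤ h + Nat.log2 w := by
  intro w
  induction w using Nat.strong_induction_on with
  | _ w ih =>
    by_cases hw : w ≤ 1
    · rw [dL, dif_pos hw]; omega
    · by_cases hp : 2 ^ Nat.log2 w = w
      · rw [dL, dif_neg hw, if_pos hp]; omega
      · rw [dL_not_pow (by omega) hp]
        have := ih (w / 2) (Nat.div_lt_self (by omega) one_lt_two)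
        rw [log2_half (by omega : 2 ≤ w)]
        omega

lemma sum_double (F : ℕ → ℕ) (a : ℕ) : ∀ b : ℕ,
    ∑ w ∈ Finset.Ico (2*a) (2*b), F w
      = ∑ c ∈ Finset.Ico a b, (F (2*c) + F (2*c+1)) := by
  intro b
  induction b with
  | zero => simp
  | succ b ih =>
    by_cases hab : a ≤ b
    · rw [Finset.sum_Ico_succ_top hab,
        show 2*(b+1) = (2*b+1)+1 by ring,
        Finset.sum_Ico_succ_top (by omega), Finset.sum_Ico_succ_top (by omega), ih,
        Nat.add_assoc]
    · rw [Finset.Ico_eq_empty (by omega), Finset.Ico_eq_empty (by omega)]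
      simp

/-- sum of weights over level `i`. -/
lemma levelsum (h : ℕ) (hh : 1 ≤ h) : ∀ i : ℕ, i ≤ h →
    ∑ w ∈ Finset.Ico (2^i) (2^(i+1)), 2^(2*h - dL h w)
      = 2^(h+i) + 2^(h-1) * (2^i - 1) := by
  intro i
  induction i with
  | zero =>
    intro _
    have e1 : Finset.Ico (2^0) (2^1) = {1} := by decide
    have e2 : dL h 1 = h := by rw [dL]; simp
    rw [e1, Finset.sum_singleton, e2, show 2*h - h = h + 0 by omega]
    simp
  | succ i ih =>
    intro hi
    have hp1 : (1:ℕ) ≤ 2^i := Nat.one_le_two_pow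
    have hih := ih (by omega)
    have h2 : (2:ℕ)^(i+1) = 2 * 2^i := by ring
    have h3 : (2:ℕ)^(i+1+1) = 2 * 2^(i+1) := by ring
    rw [h3, h2, sum_double]
    rw [Finset.sum_eq_sum_Ico_succ_bot (show 2^i < 2*2^i by omega)]
    have hc : ∀ c ∈ Finset.Ico (2^i+1) (2*2^i),
        2^(2*h - dL h (2*c)) + 2^(2*h - dL h (2*c+1)) = 2^(2*h - dL h c) := by
      intro c hc
      rw [Finset.mem_Ico] at hc
      have hlog : Nat.log2 c = i := log2_level (by omega) (by omega)
      have hlog2 : Nat.log2 (2*c) = i+1 := log2_level (by omega)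
        (by rw [show i+1+1 = i+2 by rfl]; rw [show (2:ℕ)^(i+2) = 2*(2*2^i) by ring]; omega)
      have hlog3 : Nat.log2 (2*c+1) = i+1 := log2_level (by omega)
        (by rw [show i+1+1 = i+2 by rfl]; rw [show (2:ℕ)^(i+2) = 2*(2*2^i) by ring]; omega)
      have hd1 : dL h (2*c) = dL h c + 1 := by
        rw [dL_not_pow (by omega) (by rw [hlog2, h2]; omega),
          Nat.mul_div_cancel_left c (by norm_num)]
      have hd2 : dL h (2*c+1) = dL h c + 1 := by
        rw [dL_not_pow (by omega) (by rw [hlog3, h2]; omega),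
          show (2*c+1)/2 = c by omega]
      have hb : dL h c ≤ h + i := by have := dL_le h c; rw [hlog] at this; exact this
      rw [hd1, hd2, show 2*h - (dL h c + 1) = (2*h - dL h c) - 1 by omega]
      rw [show 2*h - dL h c = (2*h - dL h c - 1) + 1 by omega, Nat.add_sub_cancel, pow_succ]
      ring
    rw [Finset.sum_congr rfl hc]
    -- use the inductive hypothesis, splitting off its bottom element
    rw [Finset.sum_eq_sum_Ico_succ_bot (show 2^i < 2^(i+1) by omega)] at hih
    have hspine : dL h (2^i) = h - i := dL_pow h i
    rw [hspine] at hih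
    rw [h2] at hih
    have hrest : ∑ c ∈ Finset.Ico (2^i+1) (2*2^i), 2^(2*h - dL h c)
        = 2^(h-1) * (2^i - 1) := by
      rw [show 2*h - (h-i) = h + i by omega] at hih
      omega
    rw [hrest]
    -- spine terms
    have e1 : dL h (2*2^i) = h - (i+1) := by
      rw [show 2*2^i = 2^(i+1) by ring, dL_pow]
    have e2 : dL h (2*2^i+1) = (h - i) + 1 := by
      rw [dL_not_pow (by omega) ?_, show (2*2^i+1)/2 = 2^i by omega, hspine]
      have : Nat.log2 (2*2^i+1) = i+1 := log2_level (by omega)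
        (by rw [show (2:ℕ)^(i+1+1) = 2*(2*2^i) by ring]; omega)
      rw [this]
      have : (2:ℕ)^(i+1) = 2*2^i := by ring
      omega
    rw [e1, e2, show 2*h - (h-(i+1)) = h+i+1 by omega,
      show 2*h - ((h-i)+1) = h+i-1 by omega]
    have e3 : (2:ℕ)^(h+i-1) = 2^(h-1) * 2^i := by
      rw [← pow_add]; congr 1; omega
    have e4 : (2:ℕ)^(h+(i+1)) = 2^(h+i+1) := by congr 1
    rw [e3, e4]
    have e5 : 2^(h-1) * 2^i + 2^(h-1) * (2^i - 1) = 2^(h-1) * (2*2^i - 1) := by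
      rw [← Nat.mul_add]; congr 1; omega
    omega




/-- Vertices of the complete binary tree `T^h` of height `h` are the heap
indices `1 ≤ v < 2^(h+1)`; the root is `1`, the vertices at level `i` are
those with `2^i ≤ v < 2^(i+1)`, and the parent of `v` is `v / 2`.
A pebbling move removes two pebbles from a vertex `u` and places one pebble
on an adjacent vertex `v`. -/
def PebMove (h : ℕ) (f g : ℕ → ℕ) : Prop :=
  ∃ u v : ℕ, (1 ≤ u ∧ u < 2 ^ (h + 1)) ∧ (1 ≤ v ∧ v < 2 ^ (h + 1)) ∧
    (u = v / 2 ∨ v = u / 2) ∧ 2 ≤ f u ∧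
    g = fun w => if w = u then f u - 2 else if w = v then f v + 1 else f w

/-- the weight of configuration `g` w.r.t. the leftmost leaf `2^h`. -/
def Wt (h : ℕ) (g : ℕ → ℕ) : ℕ :=
  ∑ w ∈ Finset.Ico 1 (2^(h+1)), g w * 2^(2*h - dL h w)

lemma Wt_mono {h : ℕ} {f g : ℕ → ℕ} (hm : PebMove h f g) : Wt h g ≤ Wt h f := by
  obtain ⟨u, v, hu, hv, hadj, hfu, hg⟩ := hm
  subst hg
  have hne : u ≠ v := by
    rcases hadj with rfl | rfl <;> omega
  have hdv : dL h u ≤ dL h v + 1 := by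
    rcases hadj with rfl | rfl
    · exact (dL_adj (by omega)).1
    · exact (dL_adj (by omega)).2
  have hcv : 2^(2*h - dL h v) ≤ 2 * 2^(2*h - dL h u) := by
    calc 2^(2*h - dL h v) ≤ 2^((2*h - dL h u) + 1) :=
          Nat.pow_le_pow_right (by norm_num) (by omega)
      _ = 2 * 2^(2*h - dL h u) := by rw [pow_succ]; ring
  set s := Finset.Ico 1 (2^(h+1)) with hs
  have hus : u ∈ s := by rw [hs, Finset.mem_Ico]; omega
  have hvs : v ∈ s.erase u := by
    rw [Finset.mem_erase, hs, Finset.mem_Ico]; exact ⟨hne.symm, by omega⟩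
  unfold Wt
  rw [← Finset.add_sum_erase _ _ hus, ← Finset.add_sum_erase _ _ hvs,
    ← Finset.add_sum_erase _ _ hus, ← Finset.add_sum_erase _ _ hvs]
  have hR : ∀ w ∈ (s.erase u).erase v,
      (if w = u then f u - 2 else if w = v then f v + 1 else f w) * 2^(2*h - dL h w)
        = f w * 2^(2*h - dL h w) := by
    intro w hw
    rw [Finset.mem_erase, Finset.mem_erase] at hw
    rw [if_neg hw.2.1, if_neg hw.1]
  rw [Finset.sum_congr rfl hR]
  beta_reduce
  rw [if_pos rfl, if_neg (Ne.symm hne), if_pos rfl]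
  obtain ⟨m, hm⟩ : ∃ m, f u = m + 2 := ⟨f u - 2, by omega⟩
  rw [hm, show m + 2 - 2 = m by omega, Nat.add_mul, Nat.add_mul, one_mul]
  omega

lemma decomp (G : ℕ → ℕ) : ∀ k : ℕ,
    ∑ w ∈ Finset.Ico 1 (2^(k+1)), G w
      = ∑ i ∈ Finset.range (k+1), ∑ w ∈ Finset.Ico (2^i) (2^(i+1)), G w := by
  intro k
  induction k with
  | zero => norm_num
  | succ k ih =>
    rw [Finset.sum_range_succ, ← ih,
      Finset.sum_Ico_consecutive _ Nat.one_le_two_pow (Nat.pow_le_pow_right (by norm_num) (by omega))]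


/-- Let `f = {f_0, …, f_h}` be a symmetric pebbling configuration on `T^h`
(`f i` pebbles on each vertex of level `i`, i.e. the vertex `v` carries
`f (Nat.log2 v)` pebbles).  If `f` can deliver a pebble to every leaf of `T^h`
by pebbling moves, then `3·n(f) − c(f) ≥ 2^{h+1}`, where
`n(f) = Σ 2^i·f_i` and `c(f) = Σ f_i`. -/
theorem liquid_necessary_condition (h : ℕ) (hh : 1 ≤ h) (f : ℕ → ℕ)
    (hreach : ∀ v : ℕ, 2 ^ h ≤ v → v < 2 ^ (h + 1) →
      ∃ g : ℕ → ℕ,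
        Relation.ReflTransGen (PebMove h) (fun w => f (Nat.log2 w)) g ∧ 1 ≤ g v) :
    2 ^ (h + 1) ≤
      3 * (∑ i ∈ Finset.range (h + 1), 2 ^ i * f i) -
        ∑ i ∈ Finset.range (h + 1), f i := by
  set F : ℕ → ℕ := fun w => f (Nat.log2 w) with hF
  obtain ⟨g, hrel, hgv⟩ := hreach (2^h) le_rfl
    (Nat.pow_lt_pow_right (by norm_num) (by omega))
  -- weight is non-increasing along the pebbling sequence
  have hWle : ∀ g' : ℕ → ℕ, Relation.ReflTransGen (PebMove h) F g' →
      Wt h g' ≤ Wt h F := by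
    intro g' hrel'
    induction hrel' with
    | refl => exact le_rfl
    | tail _ hstep ih => exact le_trans (Wt_mono hstep) ih
  -- the weight must be at least 2^(2h) to deliver a pebble to the leaf 2^h
  have hlow : 2^(2*h) ≤ Wt h g := by
    have hmem : 2^h ∈ Finset.Ico 1 (2^(h+1)) :=
      Finset.mem_Ico.2 ⟨Nat.one_le_two_pow,
        Nat.pow_lt_pow_right (by norm_num) (by omega)⟩
    have hsingle := Finset.single_le_sum
      (f := fun w => g w * 2^(2*h - dL h w)) (fun i _ => Nat.zero_le _) hmem
    have he : dL h (2^h) = 0 := by rw [dL_pow]; omega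
    beta_reduce at hsingle
    rw [he, Nat.sub_zero] at hsingle
    calc 2^(2*h) = 1 * 2^(2*h) := (one_mul _).symm
      _ ≤ g (2^h) * 2^(2*h) := Nat.mul_le_mul_right _ hgv
      _ ≤ Wt h g := hsingle
  -- compute the weight of the symmetric configuration
  have hW0 : Wt h F = ∑ i ∈ Finset.range (h+1), f i * (2^(h+i) + 2^(h-1) * (2^i - 1)) := by
    unfold Wt
    rw [decomp]
    apply Finset.sum_congr rfl
    intro i hi
    rw [Finset.mem_range] at hi
    have hlev : ∀ w ∈ Finset.Ico (2^i) (2^(i+1)),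
        F w * 2^(2*h - dL h w) = f i * 2^(2*h - dL h w) := by
      intro w hw
      rw [Finset.mem_Ico] at hw
      rw [hF]
      beta_reduce
      rw [log2_level hw.1 hw.2]
    rw [Finset.sum_congr rfl hlev, ← Finset.mul_sum, levelsum h hh i (by omega)]
  -- the key algebraic identity: 2·W + 2^h·c = 3·2^h·n
  have key : 2 * Wt h F + 2^h * (∑ i ∈ Finset.range (h+1), f i)
      = 3 * 2^h * ∑ i ∈ Finset.range (h+1), 2^i * f i := by
    rw [hW0, Finset.mul_sum, Finset.mul_sum, Finset.mul_sum, ← Finset.sum_add_distrib]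
    apply Finset.sum_congr rfl
    intro i _
    obtain ⟨q, hq⟩ : ∃ q, 2^i = q + 1 :=
      ⟨2^i - 1, by have := Nat.one_le_two_pow (n := i); omega⟩
    obtain ⟨k, rfl⟩ : ∃ k, h = k + 1 := ⟨h - 1, by omega⟩
    rw [pow_add, hq, show k + 1 - 1 = k by omega, Nat.add_sub_cancel,
      show (2:ℕ)^(k+1) = 2^k * 2 by ring]
    ring
  have hWF : 2^(2*h) ≤ Wt h F := le_trans hlow (hWle g hrel)
  have e1 : (2:ℕ)^h * 2^(h+1) = 2 * 2^(2*h) := by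
    rw [← pow_add, show h + (h+1) = (2*h)+1 by omega, pow_succ]
    ring
  have e2 : 2^h * (2^(h+1) + ∑ i ∈ Finset.range (h+1), f i)
      ≤ 2^h * (3 * ∑ i ∈ Finset.range (h+1), 2^i * f i) := by
    rw [Nat.mul_add, e1, show 2^h * (3 * ∑ i ∈ Finset.range (h+1), 2^i * f i)
      = 3 * 2^h * ∑ i ∈ Finset.range (h+1), 2^i * f i by ring]
    omega
  have e3 := Nat.le_of_mul_le_mul_left e2 (pow_pos (by norm_num) h)
  omega
end

section
/- For the family h_k = 2^{k+1} + k − 1, the μ-expansion of 2^{h_k} satisfies φ(2^{h_k}) = 2^k, and consequently α(h_k) → −1 as k → ∞; hence liminf_{h→∞} α(h) = −1. -/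
/-- `μ_i = 2^{i+1} + 2^i - 1`. -/
def mu (i : ℕ) : ℕ := 2 ^ (i + 1) + 2 ^ i - 1

/-- The largest `ℓ ≥ 1` with `μ_ℓ ≤ n` (`0` if there is none). -/
def maxMu (n : ℕ) : ℕ := Nat.findGreatest (fun ℓ => 0 < ℓ ∧ mu ℓ ≤ n) n

/-- `mudig n i` is the digit `ε_i` in the greedy μ-expansion
`n = r + ε_1·μ_1 + ⋯ + ε_ℓ·μ_ℓ` with `r ∈ {0,…,4}`. -/
def mudig (n : ℕ) : ℕ → ℕ :=
  if _h : n ≤ 4 then fun _ => 0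
  else
    let ℓ := maxMu n
    let r := n - mu ℓ
    if r = mu ℓ then fun i => if i = ℓ then 2 else 0
    else fun i => (if i = ℓ then 1 else 0) + mudig r i
termination_by n
decreasing_by
  have h1 : 1 ≤ maxMu n :=
    Nat.le_findGreatest (by omega) ⟨one_pos, by simp [mu]; omega⟩
  have h2 : 2 ≤ 2 ^ maxMu n := by
    calc (2 : ℕ) = 2 ^ 1 := rfl
    _ ≤ 2 ^ maxMu n := Nat.pow_le_pow_right (by norm_num) h1
  have : 5 ≤ mu (maxMu n) := by simp [mu]; omega
  omega

/-- Sum of the μ-digits of `m`. -/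
def phi (m : ℕ) : ℕ := ∑ i ∈ Finset.Icc 1 m, mudig m i

/-- `α(h) = (2·φ(2^h) − (h+2)) / log₂(h+2)`. -/
noncomputable def alphaF (h : ℕ) : ℝ :=
  (2 * (phi (2 ^ h) : ℝ) - (h + 2)) / Real.logb 2 (h + 2)

lemma maxMu_eq {n ℓ : ℕ} (h1 : 1 ≤ ℓ) (h2 : mu ℓ ≤ n) (h3 : n < mu (ℓ+1)) :
    maxMu n = ℓ := by
  have hln : ℓ ≤ n := by
    have : ℓ < mu ℓ := by
      have : ℓ < 2 ^ ℓ := Nat.lt_two_pow_self (n := ℓ)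
      simp [mu]; omega
    omega
  refine Nat.findGreatest_eq_iff.2 ⟨hln, fun _ => ⟨h1, h2⟩, ?_⟩
  intro m hm _ hP
  have : mu (ℓ+1) ≤ mu m := by
    have : 2 ^ (ℓ+1) ≤ 2 ^ m := Nat.pow_le_pow_right (by norm_num) hm
    have : 2 ^ (ℓ+1+1) ≤ 2 ^ (m+1) := Nat.pow_le_pow_right (by norm_num) (by omega)
    simp [mu] at *; omega
  omega

lemma maxMu_le (n : ℕ) : maxMu n ≤ n := Nat.findGreatest_le n

lemma maxMu_pos {n : ℕ} (h : 5 ≤ n) : 1 ≤ maxMu n :=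
  Nat.le_findGreatest (by omega) ⟨one_pos, by simp [mu]; omega⟩

lemma mu_le_of_maxMu {n : ℕ} (h : 5 ≤ n) : mu (maxMu n) ≤ n :=
  (Nat.findGreatest_spec (P := fun ℓ => 0 < ℓ ∧ mu ℓ ≤ n) (by omega)
    ⟨one_pos, by simp [mu]; omega⟩).2

lemma mudig_eq {n : ℕ} (h : 5 ≤ n) : mudig n =
    if (n - mu (maxMu n)) = mu (maxMu n) then fun i => if i = maxMu n then 2 else 0
    else fun i => (if i = maxMu n then 1 else 0) + mudig (n - mu (maxMu n)) i := by
  rw [mudig]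
  simp [show ¬ n ≤ 4 by omega]



lemma mudig_small {n : ℕ} (h : n ≤ 4) : mudig n = fun _ => 0 := by
  rw [mudig]; simp [h]

lemma r_le_mu {n : ℕ} (h : 5 ≤ n) : n - mu (maxMu n) ≤ mu (maxMu n) := by
  set ℓ := maxMu n with hℓ
  have h1 : 1 ≤ ℓ := maxMu_pos h
  -- n < mu (ℓ+1)
  have hlt : n < mu (ℓ+1) := by
    by_contra hc
    push_neg at hc
    have := Nat.findGreatest_is_greatest (P := fun ℓ => 0 < ℓ ∧ mu ℓ ≤ n)
      (Nat.lt_succ_self ℓ) ?_ 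
    · exact this ⟨by omega, hc⟩
    · -- ℓ + 1 ≤ n
      have : ℓ + 1 < mu (ℓ+1) := by
        have : ℓ + 1 < 2 ^ (ℓ+1) := Nat.lt_two_pow_self
        simp [mu]; omega
      omega
  have h2 : 2 ^ (ℓ+1) = 2 * 2 ^ ℓ := by ring
  have h3 : 2 ^ (ℓ+2) = 4 * 2 ^ ℓ := by ring
  simp [mu, h2, h3] at hlt ⊢
  have : 1 ≤ 2 ^ ℓ := Nat.one_le_two_pow
  omega

lemma mudig_gt_zero : ∀ n, ∀ i, maxMu n < i → mudig n i = 0 := by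
  intro n
  induction n using Nat.strong_induction_on with
  | _ n ih =>
    intro i hi
    by_cases h : n ≤ 4
    · rw [mudig_small h]
    · push_neg at h
      have h5 : 5 ≤ n := h
      rw [mudig_eq h5]
      have hne : i ≠ maxMu n := by omega
      by_cases hr : n - mu (maxMu n) = mu (maxMu n)
      · simp [hr, hne]
      · simp only [if_neg hr, if_neg hne, zero_add]
        set r := n - mu (maxMu n) with hrdef
        by_cases hr4 : r ≤ 4
        · rw [mudig_small hr4]
        · push_neg at hr4
          have h5r : 5 ≤ r := hr4
          have hrn : r < n := by
            have := mu_le_of_maxMu h5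
            have h1 : 1 ≤ maxMu n := maxMu_pos h5
            have : 5 ≤ mu (maxMu n) := by
              have : 2 ≤ 2 ^ maxMu n := by
                calc (2:ℕ) = 2^1 := rfl
                _ ≤ _ := Nat.pow_le_pow_right (by norm_num) h1
              simp [mu]; omega
            omega
          have hmm : maxMu r ≤ maxMu n := by
            have hmur := mu_le_of_maxMu h5r
            have hrle : mu (maxMu r) ≤ n := by omega
            by_contra hc
            push_neg at hc
            have := Nat.findGreatest_is_greatest (P := fun ℓ => 0 < ℓ ∧ mu ℓ ≤ n)
              (show maxMu n < maxMu r from hc) ?_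
            · exact this ⟨maxMu_pos h5r, hrle⟩
            · have : maxMu r ≤ r := maxMu_le r
              omega
          exact ih r hrn i (by omega)


lemma phi_small {n : ℕ} (h : n ≤ 4) : phi n = 0 := by
  simp [phi, mudig_small h]

lemma phi_step {n : ℕ} (h5 : 5 ≤ n) (hne : n - mu (maxMu n) ≠ mu (maxMu n)) :
    phi n = 1 + phi (n - mu (maxMu n)) := by
  set ℓ := maxMu n with hℓ
  set r := n - mu ℓ with hr
  have hℓmem : ℓ ∈ Finset.Icc 1 n := by
    simp [Finset.mem_Icc]
    exact ⟨maxMu_pos h5, maxMu_le n⟩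
  have hrn : r ≤ n := by omega
  calc phi n = ∑ i ∈ Finset.Icc 1 n, ((if i = ℓ then 1 else 0) + mudig r i) := by
        rw [phi, mudig_eq h5, if_neg hne]
    _ = (∑ i ∈ Finset.Icc 1 n, if i = ℓ then 1 else 0)
        + ∑ i ∈ Finset.Icc 1 n, mudig r i := Finset.sum_add_distrib
    _ = 1 + ∑ i ∈ Finset.Icc 1 n, mudig r i := by
        rw [Finset.sum_ite_eq' (Finset.Icc 1 n) ℓ (fun _ => (1:ℕ)), if_pos hℓmem]
    _ = 1 + phi r := by
        congr 1
        rw [phi]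
        symm
        apply Finset.sum_subset
        · exact Finset.Icc_subset_Icc le_rfl hrn
        · intro i hin hir
          simp [Finset.mem_Icc] at hin hir
          have : maxMu r < i := by
            have := maxMu_le r
            omega
          exact mudig_gt_zero r i this

lemma phi_two {n : ℕ} (h5 : 5 ≤ n) (heq : n - mu (maxMu n) = mu (maxMu n)) :
    phi n = 2 := by
  set ℓ := maxMu n with hℓ
  have hℓmem : ℓ ∈ Finset.Icc 1 n := by
    simp [Finset.mem_Icc]
    exact ⟨maxMu_pos h5, maxMu_le n⟩
  rw [phi, mudig_eq h5, if_pos heq]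
  rw [Finset.sum_ite_eq' (Finset.Icc 1 n) ℓ (fun _ => (2:ℕ)), if_pos hℓmem]

lemma phi_mu {k : ℕ} (hk : 1 ≤ k) : phi (mu k) = 1 := by
  have h2 : 2 ≤ 2 ^ k := by
    calc (2:ℕ) = 2^1 := rfl
    _ ≤ _ := Nat.pow_le_pow_right (by norm_num) hk
  have hpow : 2 ^ (k+1) = 2 * 2 ^ k := by ring
  have hpow2 : 2 ^ (k+2) = 4 * 2 ^ k := by ring
  have h5 : 5 ≤ mu k := by simp [mu, hpow]; omega
  have hmax : maxMu (mu k) = k := by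
    apply maxMu_eq hk le_rfl
    simp [mu, hpow, hpow2]; omega
  have hr : mu k - mu (maxMu (mu k)) = 0 := by rw [hmax]; omega
  have hne : mu k - mu (maxMu (mu k)) ≠ mu (maxMu (mu k)) := by
    rw [hr, hmax]; simp [mu, hpow]; omega
  rw [phi_step h5 hne, hr, phi_small (by norm_num)]

lemma phi_chain (a j : ℕ) (hj : j + 3 ≤ 2 ^ (a+2)) :
    phi (2 ^ (a+3) + j) = 1 + phi (2 ^ (a+1) + (j+1)) := by
  have hP : 1 ≤ 2 ^ (a+1) := Nat.one_le_two_pow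
  have e2 : 2 ^ (a+2) = 2 * 2 ^ (a+1) := by ring
  have e3 : 2 ^ (a+3) = 4 * 2 ^ (a+1) := by ring
  have h5 : 5 ≤ 2 ^ (a+3) + j := by
    have : 8 ≤ 2 ^ (a+3) := by
      calc (8:ℕ) = 2^3 := rfl
      _ ≤ _ := Nat.pow_le_pow_right (by norm_num) (by omega)
    omega
  have hmax : maxMu (2 ^ (a+3) + j) = a + 1 := by
    apply maxMu_eq (by omega)
    · simp [mu, e2, e3]; omega
    · simp [mu, e2, e3]
      omega
  have hr : 2 ^ (a+3) + j - mu (maxMu (2 ^ (a+3) + j)) = 2 ^ (a+1) + (j+1) := by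
    rw [hmax]; simp [mu, e2, e3]; omega
  have hne : 2 ^ (a+3) + j - mu (maxMu (2 ^ (a+3) + j)) ≠ mu (maxMu (2 ^ (a+3) + j)) := by
    rw [hr, hmax]; simp [mu, e2]; omega
  rw [phi_step h5 hne, hr]


lemma phi_family : ∀ b c k m : ℕ, 1 ≤ k → c + b + 1 = 2 ^ k →
    m + 2 * c = 2 ^ (k+1) + k - 1 → phi (2 ^ m + c) = b + 1 := by
  intro b
  induction b with
  | zero =>
    intro c k m hk hc hm
    have h2 : 2 ≤ 2 ^ k := by
      calc (2:ℕ) = 2^1 := rfl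
      _ ≤ _ := Nat.pow_le_pow_right (by norm_num) hk
    have hpow : 2 ^ (k+1) = 2 * 2 ^ k := by ring
    have hkk : k + 1 ≤ 2 ^ k := Nat.succ_le_of_lt (Nat.lt_two_pow_self (n := k))
    have hmk : m = k + 1 := by omega
    have : 2 ^ m + c = mu k := by
      simp [mu, hmk]; omega
    rw [this, phi_mu hk]
  | succ b ih =>
    intro c k m hk hc hm
    have h2 : 2 ≤ 2 ^ k := by
      calc (2:ℕ) = 2^1 := rfl
      _ ≤ _ := Nat.pow_le_pow_right (by norm_num) hk
    have hpow : 2 ^ (k+1) = 2 * 2 ^ k := by ring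
    have hkk : k + 1 ≤ 2 ^ k := Nat.succ_le_of_lt (Nat.lt_two_pow_self (n := k))
    -- m ≥ k + 3
    have hm3 : k + 3 ≤ m := by omega
    obtain ⟨a, rfl⟩ : ∃ a, m = a + 3 := ⟨m - 3, by omega⟩
    have hak : k ≤ a := by omega
    have hcond : c + 3 ≤ 2 ^ (a+2) := by
      have : 2 ^ (k+2) ≤ 2 ^ (a+2) := Nat.pow_le_pow_right (by norm_num) (by omega)
      have h4 : 2 ^ (k+2) = 4 * 2 ^ k := by ring
      omega
    rw [phi_chain a c hcond]
    rw [ih (c+1) k (a+1) hk (by omega) (by omega)]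
    omega

lemma phi_family_main (k : ℕ) (hk : 1 ≤ k) :
    phi (2 ^ (2 ^ (k+1) + k - 1)) = 2 ^ k := by
  have h1 : 1 ≤ 2 ^ k := Nat.one_le_two_pow
  have := phi_family (2 ^ k - 1) 0 k (2 ^ (k+1) + k - 1) hk (by omega) (by omega)
  simpa using this.trans (by omega)

lemma phi_lb : ∀ d a j : ℕ,
    (∀ d', d' ≤ d → 2 ^ (2*d') * (j + d' + 3) ≤ 2 ^ (a+2)) →
    d + 1 ≤ phi (2 ^ (a+3) + j) := by
  intro d
  induction d with
  | zero =>
    intro a j hcond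
    have h0 := hcond 0 le_rfl
    simp at h0
    rw [phi_chain a j h0]
    omega
  | succ d ih =>
    intro a j hcond
    have h0 := hcond 0 (by omega)
    simp at h0
    have h1 := hcond 1 (by omega)
    have ha2 : 2 ≤ a := by
      by_contra hc
      push_neg at hc
      interval_cases a <;> simp_all <;> omega
    obtain ⟨a', rfl⟩ : ∃ a', a = a' + 2 := ⟨a - 2, by omega⟩
    rw [phi_chain _ j h0, show a' + 2 + 1 = a' + 3 by omega]
    have := ih a' (j+1) ?_
    · omega
    · intro d' hd'
      have h := hcond (d'+1) (by omega)
      have e1 : (2:ℕ) ^ (2*(d'+1)) * (j + (d'+1) + 3)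
          = 4 * (2 ^ (2*d') * (j + 1 + d' + 3)) := by ring
      have e2 : (2:ℕ) ^ (a'+2+2) = 4 * 2 ^ (a'+2) := by ring
      rw [e1, e2] at h
      exact Nat.le_of_mul_le_mul_left h (by norm_num)


lemma phi_pow_lb (h : ℕ) (h3 : 3 ≤ h) :
    h ≤ 2 * phi (2 ^ h) + Nat.clog 2 (h + 3) := by
  have hKpow : h + 3 ≤ 2 ^ Nat.clog 2 (h + 3) := Nat.le_pow_clog (by norm_num) _
  generalize hgen : Nat.clog 2 (h + 3) = K at *
  obtain ⟨a, rfl⟩ : ∃ a, h = a + 3 := ⟨h - 3, by omega⟩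
  by_cases hcase : a + 3 ≤ K + 1
  · have : 1 ≤ phi (2 ^ (a+3) + 0) := phi_lb 0 a 0 (by
      intro d' hd'
      interval_cases d'
      simp
      calc (3:ℕ) ≤ 2^2 := by norm_num
      _ ≤ 2 ^ (a+2) := Nat.pow_le_pow_right (by norm_num) (by omega))
    simp at this
    omega
  · push_neg at hcase
    have hK3 : 3 ≤ K := by
      by_contra hc
      push_neg at hc
      interval_cases K <;> simp_all <;> omega
    have h1 : (a + 2 - K) / 2 + 1 ≤ phi (2 ^ (a+3) + 0) := by
      apply phi_lb
      intro d' hd'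
      simp only [zero_add]
      have hda : (a + 2 - K) / 2 ≤ a := by omega
      have hd3 : d' + 3 ≤ 2 ^ K := by omega
      calc 2 ^ (2*d') * (d' + 3) ≤ 2 ^ (2*((a + 2 - K) / 2)) * 2 ^ K := by
            apply Nat.mul_le_mul
            · exact Nat.pow_le_pow_right (by norm_num) (by omega)
            · exact hd3
        _ = 2 ^ (2*((a + 2 - K) / 2) + K) := by rw [pow_add]
        _ ≤ 2 ^ (a+2) := Nat.pow_le_pow_right (by norm_num) (by omega)
    simp at h1
    omega



lemma logb_two_pow (n : ℕ) : Real.logb 2 ((2:ℝ)^n) = n := by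
  rw [Real.logb_pow]; simp [Real.logb_self_eq_one]

lemma two_le_logb {h : ℕ} (hh : 2 ≤ h) : (2:ℝ) ≤ Real.logb 2 ((h:ℝ)+2) := by
  calc (2:ℝ) = Real.logb 2 ((2:ℝ)^(2:ℕ)) := by rw [logb_two_pow]; norm_num
  _ ≤ Real.logb 2 ((h:ℝ)+2) := by
      apply Real.logb_le_logb_of_le (by norm_num) (by norm_num)
      have : (2:ℝ) ≤ (h:ℝ) := by exact_mod_cast hh
      norm_num; linarith

lemma clog_le_logb (h : ℕ) (hh : 1 ≤ h) :
    (Nat.clog 2 (h+3) : ℝ) ≤ Real.logb 2 ((h:ℝ)+2) + 2 := by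
  have hK1 : 1 ≤ Nat.clog 2 (h+3) := Nat.clog_pos (by norm_num) (by omega)
  have hlt : 2 ^ (Nat.clog 2 (h+3) - 1) < h + 3 :=
    Nat.pow_pred_clog_lt_self (by norm_num) (x := h + 3) (by omega)
  have h2K : 2 ^ Nat.clog 2 (h+3) ≤ 2 * (h + 2) := by
    have : 2 ^ Nat.clog 2 (h+3) = 2 * 2 ^ (Nat.clog 2 (h+3) - 1) := by
      rw [← pow_succ']
      congr 1
    omega
  have h2KR : (2:ℝ) ^ Nat.clog 2 (h+3) ≤ 2 * ((h:ℝ) + 2) := by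
    calc (2:ℝ) ^ Nat.clog 2 (h+3) = ((2 ^ Nat.clog 2 (h+3) : ℕ) : ℝ) := by push_cast; ring
    _ ≤ ((2 * (h+2) : ℕ) : ℝ) := by exact_mod_cast h2K
    _ = 2 * ((h:ℝ) + 2) := by push_cast; ring
  calc (Nat.clog 2 (h+3) : ℝ) = Real.logb 2 ((2:ℝ) ^ Nat.clog 2 (h+3)) := by
        rw [logb_two_pow]
  _ ≤ Real.logb 2 (2 * ((h:ℝ)+2)) := by
        apply Real.logb_le_logb_of_le (by norm_num) (by positivity) h2KR
  _ = 1 + Real.logb 2 ((h:ℝ)+2) := by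
        rw [Real.logb_mul (by norm_num) (by positivity)]
        simp [Real.logb_self_eq_one]
  _ ≤ Real.logb 2 ((h:ℝ)+2) + 2 := by linarith

lemma alphaF_lb (h : ℕ) (hh : 3 ≤ h) :
    -1 - 4 / Real.logb 2 ((h:ℝ)+2) ≤ alphaF h := by
  have hL : (2:ℝ) ≤ Real.logb 2 ((h:ℝ)+2) := two_le_logb (by omega)
  have hL0 : (0:ℝ) < Real.logb 2 ((h:ℝ)+2) := by linarith
  have hKle := clog_le_logb h (by omega)
  have hphi := phi_pow_lb h hh
  have hphiR : (h:ℝ) ≤ 2 * (phi (2^h) : ℝ) + (Nat.clog 2 (h+3) : ℝ) := by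
    exact_mod_cast hphi
  set L := Real.logb 2 ((h:ℝ)+2) with hLdef
  have hnum : -(L + 4) ≤ 2 * (phi (2^h) : ℝ) - ((h:ℝ) + 2) := by linarith
  have : -(L + 4) / L ≤ alphaF h := by
    rw [alphaF]
    push_cast
    rw [← hLdef]
    gcongr
  calc -1 - 4 / L = -(L+4)/L := by field_simp; ring
  _ ≤ alphaF h := this


lemma hk_ge (k : ℕ) : k ≤ 2 ^ (k+1) + k - 1 := by
  have : 1 ≤ 2^(k+1) := Nat.one_le_two_pow
  omega

lemma alphaF_family_eq (k : ℕ) (hk : 1 ≤ k) :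
    alphaF (2 ^ (k+1) + k - 1) = -((k:ℝ)+1) / Real.logb 2 ((2:ℝ)^(k+1) + (k:ℝ) + 1) := by
  have h1 : 1 ≤ 2^(k+1) := Nat.one_le_two_pow (n := k+1)
  have hcast : ((2 ^ (k+1) + k - 1 : ℕ) : ℝ) + 2 = (2:ℝ)^(k+1) + (k:ℝ) + 1 := by
    have he : (2 ^ (k+1) + k - 1 : ℕ) + 2 = 2^(k+1) + k + 1 := by omega
    have h2 := congrArg (fun n : ℕ => (n : ℝ)) he
    push_cast at h2
    linarith
  rw [alphaF, phi_family_main k hk, hcast]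
  congr 1
  push_cast
  ring

lemma logb_family_lb (k : ℕ) : (k:ℝ) + 1 ≤ Real.logb 2 ((2:ℝ)^(k+1) + (k:ℝ) + 1) := by
  calc (k:ℝ)+1 = Real.logb 2 ((2:ℝ)^(k+1)) := by rw [logb_two_pow]; push_cast; ring
  _ ≤ _ := by
      apply Real.logb_le_logb_of_le (by norm_num) (by positivity)
      have : (0:ℝ) ≤ (k:ℝ) := k.cast_nonneg
      linarith

lemma logb_family_ub (k : ℕ) : Real.logb 2 ((2:ℝ)^(k+1) + (k:ℝ) + 1) ≤ (k:ℝ) + 2 := by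
  have hk2 : (k:ℝ) + 1 ≤ (2:ℝ)^(k+1) := by
    have h2 : (k+1 : ℕ) < 2^(k+1) := Nat.lt_two_pow_self
    have h3 : ((k+1:ℕ):ℝ) ≤ ((2^(k+1):ℕ):ℝ) := by exact_mod_cast h2.le
    push_cast at h3
    linarith
  calc Real.logb 2 ((2:ℝ)^(k+1) + (k:ℝ) + 1)
      ≤ Real.logb 2 ((2:ℝ)^(k+2)) := by
        apply Real.logb_le_logb_of_le (by norm_num) (by positivity)
        have : (2:ℝ)^(k+2) = 2 * 2^(k+1) := by ring
        linarith
  _ = (k:ℝ) + 2 := by rw [logb_two_pow]; push_cast; ring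

lemma alphaF_family_bounds (k : ℕ) (hk : 1 ≤ k) :
    -1 ≤ alphaF (2^(k+1)+k-1) ∧ alphaF (2^(k+1)+k-1) ≤ -(((k:ℝ)+1)/((k:ℝ)+2)) := by
  have hlo := logb_family_lb k
  have hhi := logb_family_ub k
  have hk0 : (0:ℝ) ≤ (k:ℝ) := k.cast_nonneg
  rw [alphaF_family_eq k hk]
  set L := Real.logb 2 ((2:ℝ)^(k+1) + (k:ℝ) + 1) with hL
  have hL0 : 0 < L := by linarith
  constructor
  · rw [neg_div, neg_le_neg_iff, div_le_one hL0]
    linarith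
  · rw [neg_div, neg_le_neg_iff]
    apply div_le_div_of_nonneg_left (by linarith) hL0 (by linarith)

lemma tendsto_inv_k2 : Filter.Tendsto (fun k : ℕ => 1/((k:ℝ)+2)) Filter.atTop (nhds 0) := by
  simp only [one_div]
  apply Filter.Tendsto.inv_tendsto_atTop
  apply Filter.tendsto_atTop_add_const_right
  exact tendsto_natCast_atTop_atTop

lemma tendsto_family :
    Filter.Tendsto (fun k : ℕ => alphaF (2 ^ (k + 1) + k - 1)) Filter.atTop (nhds (-1)) := by
  have hupper : Filter.Tendsto (fun k : ℕ => -(((k:ℝ)+1)/((k:ℝ)+2)))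
      Filter.atTop (nhds (-1)) := by
    have heq : (fun k : ℕ => -(((k:ℝ)+1)/((k:ℝ)+2)))
        = fun k : ℕ => -(1 - 1/((k:ℝ)+2)) := by
      funext k
      have hne : ((k:ℝ)+2) ≠ 0 := by positivity
      field_simp
      ring
    rw [heq]
    have h0 : Filter.Tendsto (fun k : ℕ => -(1 - 1/((k:ℝ)+2)))
        Filter.atTop (nhds (-(1 - 0))) :=
      (tendsto_const_nhds.sub tendsto_inv_k2).neg
    simpa using h0
  apply tendsto_of_tendsto_of_tendsto_of_le_of_le' tendsto_const_nhds hupper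
  · filter_upwards [Filter.eventually_ge_atTop 1] with k hk using (alphaF_family_bounds k hk).1
  · filter_upwards [Filter.eventually_ge_atTop 1] with k hk using (alphaF_family_bounds k hk).2

lemma alphaF_bddbelow : ∀ᶠ h in Filter.atTop, -3 ≤ alphaF h := by
  filter_upwards [Filter.eventually_ge_atTop 3] with h hh
  have hlb := alphaF_lb h hh
  have hL := two_le_logb (show 2 ≤ h by omega)
  have hL0 : 0 < Real.logb 2 ((h:ℝ)+2) := by linarith
  have : 4 / Real.logb 2 ((h:ℝ)+2) ≤ 2 := by
    rw [div_le_iff₀ hL0]; linarith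
  linarith

lemma liminf_alphaF : Filter.liminf alphaF Filter.atTop = -1 := by
  have hbdd : Filter.IsBoundedUnder (· ≥ ·) Filter.atTop alphaF :=
    Filter.isBoundedUnder_of_eventually_ge alphaF_bddbelow
  have hfreq0 : ∃ᶠ h in Filter.atTop, alphaF h ≤ 0 := by
    rw [Filter.frequently_atTop]
    intro N
    refine ⟨2^(max N 1 + 1) + max N 1 - 1, ?_, ?_⟩
    · have h1 := hk_ge (max N 1)
      have h2 : N ≤ max N 1 := le_max_left N 1
      omega
    · have hub := (alphaF_family_bounds (max N 1) (le_max_right N 1)).2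
      have : (0:ℝ) ≤ ((max N 1 : ℕ):ℝ)+1 := by positivity
      have hpos : (0:ℝ) < ((max N 1 : ℕ):ℝ)+2 := by positivity
      have : -((((max N 1 : ℕ):ℝ)+1)/(((max N 1 : ℕ):ℝ)+2)) ≤ 0 :=
        neg_nonpos.2 (by positivity)
      linarith
  have hcob : Filter.IsCoboundedUnder (· ≥ ·) Filter.atTop alphaF :=
    Filter.IsCoboundedUnder.of_frequently_le hfreq0
  have hge : (-1:ℝ) ≤ Filter.liminf alphaF Filter.atTop := by
    apply le_of_forall_pos_le_add
    intro ε hε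
    have key : -1 - ε ≤ Filter.liminf alphaF Filter.atTop := by
      apply Filter.le_liminf_of_le hcob
      obtain ⟨N, hN⟩ := exists_nat_ge (4/ε)
      filter_upwards [Filter.eventually_ge_atTop (max 3 (2^(N+1)))] with h hh
      have h3 : 3 ≤ h := le_trans (le_max_left _ _) hh
      have hlb := alphaF_lb h h3
      have hL2 := two_le_logb (show 2 ≤ h by omega)
      have hL0 : 0 < Real.logb 2 ((h:ℝ)+2) := by linarith
      have hLN : ((N:ℝ)+1) ≤ Real.logb 2 ((h:ℝ)+2) := by
        calc ((N:ℝ)+1) = Real.logb 2 ((2:ℝ)^(N+1)) := by rw [logb_two_pow]; push_cast; ring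
        _ ≤ _ := by
            apply Real.logb_le_logb_of_le (by norm_num) (by positivity)
            have h1 : (2^(N+1):ℕ) ≤ h := le_trans (le_max_right _ _) hh
            have h2 : ((2^(N+1):ℕ):ℝ) ≤ (h:ℝ) := by exact_mod_cast h1
            push_cast at h2
            linarith
      have h4L : 4 / Real.logb 2 ((h:ℝ)+2) ≤ ε := by
        rw [div_le_iff₀ hL0]
        have hN1 : 4/ε ≤ (N:ℝ) := hN
        rw [div_le_iff₀ hε] at hN1
        nlinarith
      linarith
    linarith
  have hle : Filter.liminf alphaF Filter.atTop ≤ -1 := by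
    apply le_of_forall_pos_le_add
    intro ε hε
    apply Filter.liminf_le_of_frequently_le ?_ hbdd
    rw [Filter.frequently_atTop]
    intro N
    obtain ⟨M, hM⟩ := exists_nat_ge (1/ε)
    set k := max 1 (max N M) with hkdef
    have hk1 : 1 ≤ k := le_max_left 1 _
    have hkN : N ≤ k := le_trans (le_max_left N M) (le_max_right 1 _)
    have hkM : M ≤ k := le_trans (le_max_right N M) (le_max_right 1 _)
    refine ⟨2^(k+1)+k-1, ?_, ?_⟩
    · have := hk_ge k
      omega
    · have hub := (alphaF_family_bounds k hk1).2
      have hkMR : (M:ℝ) ≤ (k:ℝ) := by exact_mod_cast hkM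
      have hk2 : (0:ℝ) < (k:ℝ)+2 := by positivity
      rw [div_le_iff₀ hε] at hM
      have h1ε : 1 ≤ ε * ((k:ℝ)+2) := by nlinarith
      have h2 : (1 - ε) ≤ ((k:ℝ)+1)/((k:ℝ)+2) := by
        rw [le_div_iff₀ hk2]
        nlinarith
      linarith
  linarith

/-- For the family `h_k = 2^{k+1} + k − 1`, `φ(2^{h_k}) = 2^k`; consequently
`α(h_k) → −1` as `k → ∞`, and `liminf_{h→∞} α(h) = −1`. -/
theorem alpha_liminf :
    (∀ k : ℕ, 1 ≤ k → phi (2 ^ (2 ^ (k + 1) + k - 1)) = 2 ^ k) ∧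
    Filter.Tendsto (fun k : ℕ => alphaF (2 ^ (k + 1) + k - 1))
      Filter.atTop (nhds (-1)) ∧
    Filter.liminf alphaF Filter.atTop = -1 :=
  ⟨fun k hk => phi_family_main k hk, tendsto_family, liminf_alphaF⟩
end
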